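/- In the canonical game G(X₀): for any play (α,δ,ω)∈P, any formula ¬(φ→B_C^D φ) ∈ hd(ω), and any action profile s∈Δ^D, there exists a play (α',δ',ω')∈P such that α∼_C α', s =_D δ', and φ∈hd(ω'). -/

import Mathlib

namespace DutyToWarn

/-- The language Φ: propositional variables, negation, implication,
distributed knowledge `K_C φ`, and second-order blameworthiness `B_C^D φ`. -/
inductive Formula (Agent V : Type) : Type
  | var : V → Formula Agent V
  | neg : Formula Agent V → Formula Agent V
  | imp : Formula Agent V → Formula Agent V → Formula Agent V
  | know : Set Agent → Formula Agent V → Formula Agent V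
  | blame : Set Agent → Set Agent → Formula Agent V → Formula Agent V

variable {Agent V B : Type}

namespace Formula

/-- φ ∨ ψ is defined through ¬ and → in the usual way: ¬φ → ψ. -/
def disj (φ ψ : Formula Agent V) : Formula Agent V := imp (neg φ) ψ

/-- φ ∧ ψ is defined through ¬ and → in the usual way: ¬(φ → ¬ψ). -/
def conj (φ ψ : Formula Agent V) : Formula Agent V := neg (imp φ (neg ψ))

/-- φ ↔ ψ is defined as (φ → ψ) ∧ (ψ → φ). -/
def biimp (φ ψ : Formula Agent V) : Formula Agent V := conj (imp φ ψ) (imp ψ φ)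

/-- K̄_C φ abbreviates ¬ K_C ¬ φ. -/
def dknow (C : Set Agent) (φ : Formula Agent V) : Formula Agent V := neg (know C (neg φ))

end Formula

/-- The Boolean constant ⊥, defined through ¬ and →. -/
def falsum [Inhabited V] : Formula Agent V :=
  Formula.neg (Formula.imp (Formula.var default) (Formula.var default))

/-- The disjunction χ₁ ∨ … ∨ χₙ of a list of formulas; for n = 0 it is ⊥. -/
def bigOr [Inhabited V] : List (Formula Agent V) → Formula Agent V
  | [] => falsum
  | [φ] => φ
  | φ :: ψ :: l => φ.disj (bigOr (ψ :: l))

/-- A propositional valuation: any assignment of truth values to formulas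
that respects negation and implication (treating K- and B-formulas as atoms). -/
def IsPropValuation (v : Formula Agent V → Prop) : Prop :=
  (∀ φ : Formula Agent V, v φ.neg ↔ ¬ v φ) ∧
    ∀ φ ψ : Formula Agent V, v (φ.imp ψ) ↔ (v φ → v ψ)

/-- A propositional tautology in the language Φ. -/
def Tautology (φ : Formula Agent V) : Prop :=
  ∀ v : Formula Agent V → Prop, IsPropValuation v → v φ

/-- ⊢ φ : provability from the axioms using Modus Ponens and Necessitation. -/
inductive Provable : Formula Agent V → Prop
  | taut {φ : Formula Agent V} : Tautology φ → Provable φ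
  | truthK {C : Set Agent} {φ : Formula Agent V} :
      Provable ((Formula.know C φ).imp φ)
  | truthB {C D : Set Agent} {φ : Formula Agent V} :
      Provable ((Formula.blame C D φ).imp φ)
  | distr {C : Set Agent} {φ ψ : Formula Agent V} :
      Provable ((Formula.know C (φ.imp ψ)).imp ((Formula.know C φ).imp (Formula.know C ψ)))
  | negIntro {C : Set Agent} {φ : Formula Agent V} :
      Provable ((Formula.know C φ).neg.imp (Formula.know C (Formula.know C φ).neg))
  | monoK {C E : Set Agent} {φ : Formula Agent V} (h : C ⊆ E) :
      Provable ((Formula.know C φ).imp (Formula.know E φ))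
  | monoB {C D E F : Set Agent} {φ : Formula Agent V} (h1 : C ⊆ E) (h2 : D ⊆ F) :
      Provable ((Formula.blame C D φ).imp (Formula.blame E F φ))
  | noneToAct {C : Set Agent} {φ : Formula Agent V} :
      Provable (Formula.neg (Formula.blame C ∅ φ))
  | jointResp {C D E F : Set Agent} {φ ψ : Formula Agent V} (h : D ∩ F = ∅) :
      Provable (((Formula.dknow C (Formula.blame C D φ)).conj
        (Formula.dknow E (Formula.blame E F ψ))).imp
        ((φ.disj ψ).imp (Formula.blame (C ∪ E) (D ∪ F) (φ.disj ψ))))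
  | strictCond {C D : Set Agent} {φ ψ : Formula Agent V} :
      Provable ((Formula.know C (φ.imp ψ)).imp
        ((Formula.blame C D ψ).imp (φ.imp (Formula.blame C D φ))))
  | introB {C D : Set Agent} {φ : Formula Agent V} :
      Provable ((Formula.blame C D φ).imp (Formula.know C (φ.imp (Formula.blame C D φ))))
  | mp {φ ψ : Formula Agent V} : Provable (φ.imp ψ) → Provable φ → Provable ψ
  | nec {C : Set Agent} {φ : Formula Agent V} : Provable φ → Provable (Formula.know C φ)

/-- X ⊢ φ : provability from the theorems of the system together with the
additional hypotheses X, using only Modus Ponens. -/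
inductive ProvableFrom (X : Set (Formula Agent V)) : Formula Agent V → Prop
  | hyp {φ : Formula Agent V} (h : φ ∈ X) : ProvableFrom X φ
  | thm {φ : Formula Agent V} (h : Provable φ) : ProvableFrom X φ
  | mp {φ ψ : Formula Agent V} (h1 : ProvableFrom X (φ.imp ψ)) (h2 : ProvableFrom X φ) :
      ProvableFrom X ψ

/-- A game (Definition 1). -/
structure Game (Agent V : Type) where
  I : Type
  Δ : Type
  Ω : Type
  sim : Agent → I → I → Prop
  sim_equiv : ∀ a : Agent, Equivalence (sim a)
  P : Set (I × (Agent → Δ) × Ω)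
  play_exists : ∀ (α : I) (δ : Agent → Δ), ∃ ω : Ω, (α, δ, ω) ∈ P
  π : V → Set (I × (Agent → Δ) × Ω)
  π_sub : ∀ p : V, π p ⊆ P

/-- α ∼_C α' : indistinguishability by a coalition. -/
def Game.simC (G : Game Agent V) (C : Set Agent) (α α' : G.I) : Prop :=
  ∀ a ∈ C, G.sim a α α'

/-- Satisfiability (α,δ,ω) ⊩ φ (Definition 2). -/
def Game.Sat (G : Game Agent V) :
    Formula Agent V → (G.I × (Agent → G.Δ) × G.Ω) → Prop
  | Formula.var p, x => x ∈ G.π p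
  | Formula.neg φ, x => ¬ G.Sat φ x
  | Formula.imp φ ψ, x => G.Sat φ x → G.Sat ψ x
  | Formula.know C φ, x => ∀ x' ∈ G.P, G.simC C x.1 x'.1 → G.Sat φ x'
  | Formula.blame C D φ, x => G.Sat φ x ∧
      ∃ s : Agent → G.Δ, ∀ x' ∈ G.P, G.simC C x.1 x'.1 →
        (∀ a ∈ D, s a = x'.2.1 a) → ¬ G.Sat φ x'

/-- A set of formulas is consistent if no contradiction is derivable from it. -/
def Consistent (X : Set (Formula Agent V)) : Prop :=
  ¬ ∃ φ : Formula Agent V, ProvableFrom X φ ∧ ProvableFrom X φ.neg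

/-- A maximal consistent set: consistent with no proper consistent extension. -/
def MaxConsistent (X : Set (Formula Agent V)) : Prop :=
  Consistent X ∧ ∀ Y : Set (Formula Agent V), X ⊆ Y → Consistent Y → Y = X

/-- One step (Cᵢ,bᵢ),Xᵢ of a sequence in the set of outcomes of the canonical game. -/
abbrev Step (Agent V B : Type) : Type := Set Agent × B × Set (Formula Agent V)

/-- Validity of a sequence X₀,(C₁,b₁),X₁,…,(Cₙ,bₙ),Xₙ : each Xᵢ is maximal
consistent and {φ | K_{Cᵢ} φ ∈ X_{i-1}} ⊆ Xᵢ. -/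
def ValidSeq (X₀ : Set (Formula Agent V)) : List (Step Agent V B) → Prop
  | [] => True
  | (C, _, X) :: l =>
      MaxConsistent X ∧ (∀ φ : Formula Agent V, Formula.know C φ ∈ X₀ → φ ∈ X) ∧
        ValidSeq X l

/-- The set Ω of outcomes of the canonical game G(X₀): valid sequences starting at X₀
(the sequence of steps after X₀ is recorded). -/
def COutcome (X₀ : Set (Formula Agent V)) (B : Type) : Type :=
  {l : List (Step Agent V B) // ValidSeq X₀ l}

/-- The last maximal consistent set of a sequence. -/
def hdSeq (X₀ : Set (Formula Agent V)) : List (Step Agent V B) → Set (Formula Agent V)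
  | [] => X₀
  | (_, _, X) :: l => hdSeq X l

/-- hd(ω) : the last maximal consistent set of the outcome ω. -/
def chd {X₀ : Set (Formula Agent V)} (ω : COutcome X₀ B) : Set (Formula Agent V) :=
  hdSeq X₀ ω.1

/-- ω ∼_a ω' in the Tree of Knowledge: all edges along the unique path between
ω and ω' are labeled with agent a, i.e. there is a common ancestor w such that
every edge from w down to ω and from w down to ω' is labeled with a. -/
def csimA {X₀ : Set (Formula Agent V)} (a : Agent) (u v : COutcome X₀ B) : Prop :=
  ∃ w t t' : List (Step Agent V B),
    u.1 = w ++ t ∧ v.1 = w ++ t' ∧ (∀ s ∈ t, a ∈ s.1) ∧ (∀ s ∈ t', a ∈ s.1)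

/-- ω ∼_C ω' iff ω ∼_a ω' for each a ∈ C. -/
def csimC {X₀ : Set (Formula Agent V)} (C : Set Agent) (u v : COutcome X₀ B) : Prop :=
  ∀ a ∈ C, csimA a u v

/-- The relation ∼_𝒜 on outcomes. -/
def crel (X₀ : Set (Formula Agent V)) (B : Type) : COutcome X₀ B → COutcome X₀ B → Prop :=
  csimC (Set.univ : Set Agent)

/-- The set I of initial states of the canonical game: I = Ω/∼_𝒜. -/
def CI (X₀ : Set (Formula Agent V)) (B : Type) : Type :=
  Quot (crel X₀ B)

/-- The equivalence class of an outcome. -/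
def ctoI {X₀ : Set (Formula Agent V)} (u : COutcome X₀ B) : CI X₀ B :=
  Quot.mk (crel X₀ B) u

/-- The relation α ∼_C α' on I, induced on representatives. -/
def IsimC {X₀ : Set (Formula Agent V)} (C : Set Agent) (α α' : CI X₀ B) : Prop :=
  ∃ u v : COutcome X₀ B, ctoI u = α ∧ ctoI v = α' ∧ csimC C u v

/-- The domain of actions of the canonical game: Δ = {(φ,C,ω)}. -/
abbrev CAct (X₀ : Set (Formula Agent V)) (B : Type) : Type :=
  Formula Agent V × Set Agent × COutcome X₀ B

/-- Triples (α, δ, ω) over the canonical game. -/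
abbrev CPlay (X₀ : Set (Formula Agent V)) (B : Type) : Type :=
  CI X₀ B × (Agent → CAct X₀ B) × COutcome X₀ B

/-- The set P of plays of the canonical game (Definition 13). -/
def CP (X₀ : Set (Formula Agent V)) (B : Type) : Set (CPlay X₀ B) :=
  {x | ctoI x.2.2 = x.1 ∧
    ∀ (v : COutcome X₀ B) (C D : Set Agent) (ψ : Formula Agent V),
      Formula.dknow C (Formula.blame C D ψ) ∈ chd v →
      (∀ a ∈ D, x.2.1 a = (ψ, C, v)) →
      csimC C x.2.2 v →
      Formula.neg ψ ∈ chd x.2.2}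

/-- π(p) in the canonical game. -/
def Cπ (X₀ : Set (Formula Agent V)) (B : Type) (p : V) : Set (CPlay X₀ B) :=
  {x | x ∈ CP X₀ B ∧ Formula.var p ∈ chd x.2.2}

/-- Satisfiability in the canonical game G(X₀) (Definition 2 instantiated). -/
def CSat (X₀ : Set (Formula Agent V)) (B : Type) :
    Formula Agent V → CPlay X₀ B → Prop
  | Formula.var p, x => x ∈ Cπ X₀ B p
  | Formula.neg φ, x => ¬ CSat X₀ B φ x
  | Formula.imp φ ψ, x => CSat X₀ B φ x → CSat X₀ B ψ x
  | Formula.know C φ, x => ∀ x' ∈ CP X₀ B, IsimC C x.1 x'.1 → CSat X₀ B φ x'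
  | Formula.blame C D φ, x => CSat X₀ B φ x ∧
      ∃ s : Agent → CAct X₀ B, ∀ x' ∈ CP X₀ B, IsimC C x.1 x'.1 →
        (∀ a ∈ D, s a = x'.2.1 a) → ¬ CSat X₀ B φ x'


section Aux

variable {Agent V B : Type}
open Formula

/-- Weakening for `ProvableFrom`. -/
theorem ProvableFrom.weaken {X Y : Set (Formula Agent V)} {φ : Formula Agent V}
    (h : ProvableFrom X φ) (hXY : X ⊆ Y) : ProvableFrom Y φ := by
  induction h with
  | hyp h => exact ProvableFrom.hyp (hXY h)
  | thm h => exact ProvableFrom.thm h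
  | mp h1 h2 ih1 ih2 => exact ProvableFrom.mp ih1 ih2

/-- Compactness for `ProvableFrom`. -/
theorem ProvableFrom.compact {X : Set (Formula Agent V)} {φ : Formula Agent V}
    (h : ProvableFrom X φ) : ∃ Y ⊆ X, Y.Finite ∧ ProvableFrom Y φ := by
  induction h with
  | @hyp φ h => exact ⟨{φ}, by simpa using h, Set.finite_singleton _, ProvableFrom.hyp rfl⟩
  | thm h => exact ⟨∅, Set.empty_subset _, Set.finite_empty, ProvableFrom.thm h⟩
  | mp h1 h2 ih1 ih2 =>
    obtain ⟨Y1, hY1, hf1, hp1⟩ := ih1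
    obtain ⟨Y2, hY2, hf2, hp2⟩ := ih2
    exact ⟨Y1 ∪ Y2, Set.union_subset hY1 hY2, hf1.union hf2,
      ProvableFrom.mp (hp1.weaken Set.subset_union_left) (hp2.weaken Set.subset_union_right)⟩

/-- The deduction theorem. -/
theorem deduction {X : Set (Formula Agent V)} {ψ φ : Formula Agent V}
    (h : ProvableFrom (insert ψ X) φ) : ProvableFrom X (ψ.imp φ) := by
  induction h with
  | @hyp χ h =>
    rw [Set.mem_insert_iff] at h
    rcases h with rfl | h
    · exact ProvableFrom.thm (Provable.taut (fun v hv => by simp only [hv.2]; tauto))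
    · exact ProvableFrom.mp
        (ProvableFrom.thm (Provable.taut (fun v hv => by simp only [hv.2]; tauto)))
        (ProvableFrom.hyp h)
  | @thm χ h =>
    exact ProvableFrom.mp
      (ProvableFrom.thm (Provable.taut (fun v hv => by simp only [hv.2]; tauto)))
      (ProvableFrom.thm h)
  | @mp χ₁ χ₂ h1 h2 ih1 ih2 =>
    have hS : Provable ((ψ.imp (χ₁.imp χ₂)).imp ((ψ.imp χ₁).imp (ψ.imp χ₂))) :=
      Provable.taut (fun v hv => by simp only [hv.2]; tauto)
    exact ProvableFrom.mp (ProvableFrom.mp (ProvableFrom.thm hS) ih1) ih2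

/-- A finite subset of the union of a nonempty chain is contained in some member. -/
theorem finite_subset_chain_union {c : Set (Set (Formula Agent V))}
    (hchain : IsChain (· ⊆ ·) c) (hne : c.Nonempty) {F : Set (Formula Agent V)}
    (hF : F.Finite) (hsub : F ⊆ ⋃₀ c) : ∃ t ∈ c, F ⊆ t := by
  revert hsub
  refine Set.Finite.induction_on (motive := fun F _ => F ⊆ ⋃₀ c → ∃ t ∈ c, F ⊆ t) F hF (fun _ => ⟨hne.choose, hne.choose_spec, Set.empty_subset _⟩) ?_
  intro a F ha hFfin ih hsub
  · obtain ⟨t, htc, htF⟩ := ih (fun y hy => hsub (Set.mem_insert_of_mem _ hy))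
    obtain ⟨t', ht'c, hat'⟩ := hsub (Set.mem_insert a F)
    rcases hchain.total htc ht'c with hle | hle
    · exact ⟨t', ht'c, Set.insert_subset hat' (htF.trans hle)⟩
    · exact ⟨t, htc, Set.insert_subset (hle hat') htF⟩

theorem Consistent.mono {X Y : Set (Formula Agent V)} (hXY : X ⊆ Y) (h : Consistent Y) :
    Consistent X := fun ⟨θ, h1, h2⟩ => h ⟨θ, h1.weaken hXY, h2.weaken hXY⟩

/-- Lindenbaum's lemma. -/
theorem lindenbaum {X : Set (Formula Agent V)} (h : Consistent X) :
    ∃ Y, X ⊆ Y ∧ MaxConsistent Y := by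
  have Hc : ∀ c ⊆ {Y : Set (Formula Agent V) | Consistent Y}, IsChain (· ⊆ ·) c →
      c.Nonempty → ∃ ub ∈ {Y : Set (Formula Agent V) | Consistent Y}, ∀ s ∈ c, s ⊆ ub := by
    intro c hc hchain hne
    refine ⟨⋃₀ c, ?_, fun s hs => Set.subset_sUnion_of_mem hs⟩
    rintro ⟨θ, h1, h2⟩
    obtain ⟨Y1, hY1, hf1, hp1⟩ := h1.compact
    obtain ⟨Y2, hY2, hf2, hp2⟩ := h2.compact
    obtain ⟨t, htc, ht⟩ := finite_subset_chain_union hchain hne (hf1.union hf2)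
      (Set.union_subset hY1 hY2)
    exact hc htc ⟨θ, hp1.weaken ((Set.subset_union_left).trans ht),
      hp2.weaken ((Set.subset_union_right).trans ht)⟩
  obtain ⟨m, hXm, hm⟩ := zorn_subset_nonempty _ Hc X h
  exact ⟨m, hXm, hm.1, fun Z hmZ hZ => (hm.2 hZ hmZ).antisymm hmZ⟩

namespace MaxConsistent

variable {X : Set (Formula Agent V)} {φ ψ : Formula Agent V}

theorem mem_of_provableFrom (hX : MaxConsistent X) (h : ProvableFrom X φ) : φ ∈ X := by
  have hcons : Consistent (insert φ X) := by
    rintro ⟨θ, h1, h2⟩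
    exact hX.1 ⟨θ, (deduction h1).mp h, (deduction h2).mp h⟩
  have := hX.2 _ (Set.subset_insert φ X) hcons
  rw [← this]; exact Set.mem_insert _ _

theorem mem_of_provable (hX : MaxConsistent X) (h : Provable φ) : φ ∈ X :=
  hX.mem_of_provableFrom (ProvableFrom.thm h)

theorem mp_mem (hX : MaxConsistent X) (h1 : φ.imp ψ ∈ X) (h2 : φ ∈ X) : ψ ∈ X :=
  hX.mem_of_provableFrom ((ProvableFrom.hyp h1).mp (ProvableFrom.hyp h2))

theorem not_both (hX : MaxConsistent X) (h1 : φ ∈ X) (h2 : φ.neg ∈ X) : False :=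
  hX.1 ⟨φ, ProvableFrom.hyp h1, ProvableFrom.hyp h2⟩

theorem neg_mem (hX : MaxConsistent X) (h : φ ∉ X) : φ.neg ∈ X := by
  by_contra hneg
  apply h
  apply hX.mem_of_provableFrom
  have hcons : ¬ Consistent (insert φ.neg X) := fun hc => by
    have := hX.2 _ (Set.subset_insert _ X) hc
    rw [← this] at hneg; exact hneg (Set.mem_insert _ _)
  rw [Consistent, not_not] at hcons
  obtain ⟨θ, h1, h2⟩ := hcons
  have d1 := deduction h1
  have d2 := deduction h2
  have ht : Provable ((φ.neg.imp θ).imp ((φ.neg.imp θ.neg).imp φ)) :=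
    Provable.taut (fun v hv => by simp only [hv.1, hv.2]; tauto)
  exact ((ProvableFrom.thm ht).mp d1).mp d2

theorem not_mem_of_neg_mem (hX : MaxConsistent X) (h : φ.neg ∈ X) : φ ∉ X :=
  fun hmem => hX.not_both hmem h

end MaxConsistent

section ProvableLemmas

variable {C D E F : Set Agent} {φ ψ χ : Formula Agent V}

/-- Composition of provable implications. -/
theorem prov_comp (h1 : Provable (φ.imp ψ)) (h2 : Provable (ψ.imp χ)) :
    Provable (φ.imp χ) :=
  (((Provable.taut (show Tautology ((φ.imp ψ).imp ((ψ.imp χ).imp (φ.imp χ))) from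
    fun v hv => by simp only [hv.2]; tauto)).mp h1).mp h2)

/-- Contraposition. -/
theorem prov_contra (h : Provable (φ.imp ψ)) : Provable (ψ.neg.imp φ.neg) :=
  (Provable.taut (show Tautology ((φ.imp ψ).imp (ψ.neg.imp φ.neg)) from
    fun v hv => by simp only [hv.1, hv.2]; tauto)).mp h

/-- Reverse contraposition. -/
theorem prov_contra' (h : Provable (φ.neg.imp ψ)) : Provable (ψ.neg.imp φ) :=
  (Provable.taut (show Tautology ((φ.neg.imp ψ).imp (ψ.neg.imp φ)) from
    fun v hv => by simp only [hv.1, hv.2]; tauto)).mp h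

/-- Monotonicity of K with respect to provable implications. -/
theorem prov_know_imp (h : Provable (φ.imp ψ)) :
    Provable ((Formula.know C φ).imp (Formula.know C ψ)) :=
  Provable.distr.mp (Provable.nec h)

/-- Positive introspection: ⊢ K_C φ → K_C K_C φ. -/
theorem prov_kk : Provable ((Formula.know C φ).imp (Formula.know C (Formula.know C φ))) := by
  have h1 : Provable ((Formula.know C φ).imp (Formula.know C (Formula.know C φ).neg).neg) :=
    (Provable.taut (show Tautology (((Formula.know C (Formula.know C φ).neg).imp
        (Formula.know C φ).neg).imp ((Formula.know C φ).imp
        (Formula.know C (Formula.know C φ).neg).neg)) from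
      fun v hv => by simp only [hv.1, hv.2]; tauto)).mp Provable.truthK
  have h2 : Provable ((Formula.know C (Formula.know C φ).neg).neg.imp
      (Formula.know C (Formula.know C (Formula.know C φ).neg).neg)) := Provable.negIntro
  have h3 : Provable ((Formula.know C (Formula.know C φ).neg).neg.imp (Formula.know C φ)) :=
    prov_contra' Provable.negIntro
  have h4 := prov_know_imp (C := C) h3
  exact prov_comp (prov_comp h1 h2) h4

/-- ⊢ B_C^D φ → K̄_C B_C^D φ. -/
theorem prov_b_dknow :
    Provable ((Formula.blame C D φ).imp (Formula.dknow C (Formula.blame C D φ))) :=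
  (Provable.taut (show Tautology (((Formula.know C (Formula.blame C D φ).neg).imp
      (Formula.blame C D φ).neg).imp ((Formula.blame C D φ).imp
      (Formula.know C (Formula.blame C D φ).neg).neg)) from
    fun v hv => by simp only [hv.1, hv.2]; tauto)).mp Provable.truthK

/-- ⊢ K̄_C B_C^D φ → (φ → B_C^D φ). -/
theorem prov_dknow_blame :
    Provable ((Formula.dknow C (Formula.blame C D φ)).imp
      (φ.imp (Formula.blame C D φ))) := by
  set Bf := Formula.blame C D φ
  set I := φ.imp Bf
  have a2 : Provable ((Formula.know C I).neg.imp Bf.neg) := prov_contra Provable.introB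
  have a4 : Provable ((Formula.know C I).neg.imp
      (Formula.know C (Formula.know C I).neg)) := Provable.negIntro
  have a3 := prov_know_imp (C := C) a2
  have a5 := prov_comp a4 a3
  have a6 : Provable ((Formula.know C Bf.neg).neg.imp (Formula.know C I)) := prov_contra' a5
  exact prov_comp a6 Provable.truthK

/-- Monotonicity of K̄ B in the D-argument. -/
theorem prov_dknow_mono (h : D ⊆ F) :
    Provable ((Formula.dknow C (Formula.blame C D φ)).imp
      (Formula.dknow C (Formula.blame C F φ))) := by
  have m : Provable ((Formula.blame C D φ).imp (Formula.blame C F φ)) :=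
    Provable.monoB (le_refl C) h
  exact prov_contra (prov_know_imp (prov_contra m))

end ProvableLemmas

section Seq

theorem hdSeq_append (X₀ : Set (Formula Agent V)) (l₁ l₂ : List (Step Agent V B)) :
    hdSeq X₀ (l₁ ++ l₂) = hdSeq (hdSeq X₀ l₁) l₂ := by
  induction l₁ generalizing X₀ with
  | nil => rfl
  | cons e l ih => obtain ⟨C, b, X⟩ := e; simp [hdSeq, ih]

theorem validSeq_append {X₀ : Set (Formula Agent V)} {l₁ l₂ : List (Step Agent V B)} :
    ValidSeq X₀ (l₁ ++ l₂) ↔ ValidSeq X₀ l₁ ∧ ValidSeq (hdSeq X₀ l₁) l₂ := by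
  induction l₁ generalizing X₀ with
  | nil => simp [ValidSeq, hdSeq]
  | cons e l ih => obtain ⟨C, b, X⟩ := e; simp [ValidSeq, hdSeq, ih, and_assoc]

theorem mc_hdSeq {X₀ : Set (Formula Agent V)} (hX₀ : MaxConsistent X₀)
    {l : List (Step Agent V B)} (hl : ValidSeq X₀ l) : MaxConsistent (hdSeq X₀ l) := by
  induction l generalizing X₀ with
  | nil => exact hX₀
  | cons e l ih => obtain ⟨C, b, X⟩ := e; exact ih hl.1 hl.2.2

theorem mc_chd {X₀ : Set (Formula Agent V)} (hX₀ : MaxConsistent X₀)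
    (u : COutcome X₀ B) : MaxConsistent (chd u) := mc_hdSeq hX₀ u.2

/-- Knowledge of a subcoalition is preserved along a single edge. -/
theorem know_edge_iff {Y Z : Set (Formula Agent V)} (hY : MaxConsistent Y)
    (hZ : MaxConsistent Z) {Ce C' : Set Agent} (hsub : C' ⊆ Ce)
    (hKZ : ∀ θ : Formula Agent V, Formula.know Ce θ ∈ Y → θ ∈ Z)
    (χ : Formula Agent V) : Formula.know C' χ ∈ Y ↔ Formula.know C' χ ∈ Z := by
  constructor
  · intro h
    have h1 : Formula.know C' (Formula.know C' χ) ∈ Y := hY.mp_mem (hY.mem_of_provable prov_kk) h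
    have h2 : Formula.know Ce (Formula.know C' χ) ∈ Y :=
      hY.mp_mem (hY.mem_of_provable (Provable.monoK hsub)) h1
    exact hKZ _ h2
  · intro h
    by_contra hn
    have h1 : (Formula.know C' χ).neg ∈ Y := hY.neg_mem hn
    have h2 : Formula.know C' (Formula.know C' χ).neg ∈ Y :=
      hY.mp_mem (hY.mem_of_provable Provable.negIntro) h1
    have h3 : Formula.know Ce (Formula.know C' χ).neg ∈ Y :=
      hY.mp_mem (hY.mem_of_provable (Provable.monoK hsub)) h2
    exact hZ.not_both h (hKZ _ h3)

/-- Knowledge of C' is preserved along any C'-labeled suffix. -/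
theorem know_hdSeq_iff {Y : Set (Formula Agent V)} (hY : MaxConsistent Y) {C' : Set Agent}
    {t : List (Step Agent V B)} (hv : ValidSeq Y t) (hl : ∀ e ∈ t, C' ⊆ e.1)
    (χ : Formula Agent V) : Formula.know C' χ ∈ Y ↔ Formula.know C' χ ∈ hdSeq Y t := by
  induction t generalizing Y with
  | nil => rfl
  | cons e l ih =>
    obtain ⟨Ce, b, Z⟩ := e
    obtain ⟨hZ, hKZ, hv'⟩ := hv
    exact (know_edge_iff hY hZ (hl _ (List.mem_cons_self)) hKZ χ).trans
      (ih hZ hv' (fun e he => hl e (List.mem_cons_of_mem _ he)))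

/-- A common decomposition witness for `csimC`. -/
theorem csimC_common {X₀ : Set (Formula Agent V)} {C' : Set Agent} {u v : COutcome X₀ B}
    (h : csimC C' u v) :
    ∃ w t t' : List (Step Agent V B), u.1 = w ++ t ∧ v.1 = w ++ t' ∧
      (∀ e ∈ t, ∀ a ∈ C', a ∈ e.1) ∧ (∀ e ∈ t', ∀ a ∈ C', a ∈ e.1) := by
  rcases C'.eq_empty_or_nonempty with rfl | ⟨a₀, ha₀⟩
  · exact ⟨[], u.1, v.1, rfl, rfl, by simp, by simp⟩
  set S : Set ℕ := {n | ∃ a ∈ C', ∃ w t t' : List (Step Agent V B), w.length = n ∧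
    u.1 = w ++ t ∧ v.1 = w ++ t' ∧ (∀ e ∈ t, a ∈ e.1) ∧ (∀ e ∈ t', a ∈ e.1)} with hS
  have hne : S.Nonempty := by
    obtain ⟨w, t, t', hu, hv, ht, ht'⟩ := h a₀ ha₀
    exact ⟨w.length, a₀, ha₀, w, t, t', rfl, hu, hv, ht, ht'⟩
  have hbdd : BddAbove S := by
    refine ⟨u.1.length, fun n hn => ?_⟩
    obtain ⟨a, _, w, t, t', hw, hu, _⟩ := hn
    rw [← hw, hu, List.length_append]; omega
  obtain ⟨a₁, ha₁, w, t, t', hwlen, hu, hv', ht, ht'⟩ := Nat.sSup_mem hne hbdd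
  refine ⟨w, t, t', hu, hv', ?_, ?_⟩
  all_goals {
    intro e he a ha
    obtain ⟨wa, ta, ta', hua, hva, hta, hta'⟩ := h a ha
    have hlen : wa.length ≤ w.length := by
      rw [hwlen]
      exact le_csSup hbdd ⟨a, ha, wa, ta, ta', rfl, hua, hva, hta, hta'⟩
    have hpre1 : wa <+: u.1 := ⟨ta, hua.symm⟩
    have hpre2 : w <+: u.1 := ⟨t, hu.symm⟩
    have hpre : wa <+: w := List.prefix_of_prefix_length_le hpre1 hpre2 hlen
    obtain ⟨m, hm⟩ := hpre
    have hta2 : ta = m ++ t := List.append_cancel_left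
      (show wa ++ ta = wa ++ (m ++ t) by rw [← hua, hu, ← hm, List.append_assoc])
    have hta'2 : ta' = m ++ t' := List.append_cancel_left
      (show wa ++ ta' = wa ++ (m ++ t') by rw [← hva, hv', ← hm, List.append_assoc])
    first
    | exact hta e (hta2 ▸ List.mem_append_right m he)
    | exact hta' e (hta'2 ▸ List.mem_append_right m he)
  }

/-- Knowledge transfer along `csimC`. -/
theorem know_transfer {X₀ : Set (Formula Agent V)} (hX₀ : MaxConsistent X₀)
    {C' : Set Agent} {u v : COutcome X₀ B} (h : csimC C' u v) (χ : Formula Agent V) :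
    Formula.know C' χ ∈ chd u ↔ Formula.know C' χ ∈ chd v := by
  obtain ⟨w, t, t', hu, hv, ht, ht'⟩ := csimC_common h
  have hu2 := u.2
  have hv2 := v.2
  rw [hu, validSeq_append] at hu2
  rw [hv, validSeq_append] at hv2
  have hw : MaxConsistent (hdSeq X₀ w) := mc_hdSeq hX₀ hu2.1
  have e1 : chd u = hdSeq (hdSeq X₀ w) t := by rw [chd, hu, hdSeq_append]
  have e2 : chd v = hdSeq (hdSeq X₀ w) t' := by rw [chd, hv, hdSeq_append]
  rw [e1, e2]
  exact (know_hdSeq_iff hw hu2.2 (fun e he a' => ht e he a') χ).symm.trans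
    (know_hdSeq_iff hw hv2.2 (fun e he a' => ht' e he a') χ)

end Seq

section OrL

/-- A fixed contradictory formula. -/
def botF (φ : Formula Agent V) : Formula Agent V := φ.conj φ.neg

theorem botF_val {φ : Formula Agent V} {v : Formula Agent V → Prop}
    (hv : IsPropValuation v) : ¬ v (botF φ) := by
  simp only [botF, Formula.conj, hv.1, hv.2]; tauto

theorem neg_botF_taut (φ : Formula Agent V) : Tautology (botF φ).neg :=
  fun v hv => (hv.1 _).2 (botF_val hv)

/-- Nested disjunction over a list, with explicit base. -/
def orL (L : List (Formula Agent V)) (b : Formula Agent V) : Formula Agent V :=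
  L.foldr Formula.disj b

theorem orL_val {v : Formula Agent V → Prop} (hv : IsPropValuation v)
    (L : List (Formula Agent V)) (b : Formula Agent V) :
    v (orL L b) ↔ (∃ ψ ∈ L, v ψ) ∨ v b := by
  induction L with
  | nil => simp [orL]
  | cons ψ L ih =>
    simp only [orL, List.foldr, Formula.disj, hv.1, hv.2] at ih ⊢
    rw [ih]; simp only [List.mem_cons]
    constructor
    · intro h
      by_cases hψ : v ψ
      · exact Or.inl ⟨ψ, Or.inl rfl, hψ⟩
      · rcases h hψ with ⟨χ, hχ, hvχ⟩ | hb
        · exact Or.inl ⟨χ, Or.inr hχ, hvχ⟩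
        · exact Or.inr hb
    · rintro (⟨χ, (rfl | hχ), hvχ⟩ | hb)
      · intro hn; exact absurd hvχ hn
      · intro _; exact Or.inl ⟨χ, hχ, hvχ⟩
      · intro _; exact Or.inr hb

/-- From a maximal consistent set containing a disjunction with contradictory base,
    extract a disjunct. -/
theorem orL_mem {X : Set (Formula Agent V)} (hX : MaxConsistent X)
    {L : List (Formula Agent V)} {φ₀ : Formula Agent V}
    (h : orL L (botF φ₀) ∈ X) : ∃ ψ ∈ L, ψ ∈ X := by
  induction L with
  | nil => exact absurd h (hX.not_mem_of_neg_mem (hX.mem_of_provable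
      (Provable.taut (neg_botF_taut φ₀))))
  | cons ψ L ih =>
    by_cases hψ : ψ ∈ X
    · exact ⟨ψ, List.mem_cons_self, hψ⟩
    · have hn : ψ.neg ∈ X := hX.neg_mem hψ
      have : orL L (botF φ₀) ∈ X := hX.mp_mem h hn
      obtain ⟨χ, hχ, hχX⟩ := ih this
      exact ⟨χ, List.mem_cons_of_mem _ hχ, hχX⟩

/-- Derivability from the knowledge set yields knowledge. -/
theorem know_of_kset {X : Set (Formula Agent V)} (hX : MaxConsistent X) (C : Set Agent)
    {θ : Formula Agent V} (h : ProvableFrom {χ | Formula.know C χ ∈ X} θ) :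
    Formula.know C θ ∈ X := by
  induction h with
  | hyp h => exact h
  | thm h => exact hX.mem_of_provable (Provable.nec h)
  | mp h1 h2 ih1 ih2 => exact hX.mp_mem (hX.mp_mem (hX.mem_of_provable Provable.distr) ih1) ih2

/-- ⊢ orL L (a → b) → (a → orL L b). -/
theorem prov_orL_imp (L : List (Formula Agent V)) (a b : Formula Agent V) :
    Provable ((orL L (a.imp b)).imp (a.imp (orL L b))) := by
  induction L with
  | nil =>
    exact Provable.taut (fun v hv => by simp only [orL, List.foldr, hv.2]; tauto)
  | cons ψ L ih =>
    have t : Provable (((orL L (a.imp b)).imp (a.imp (orL L b))).imp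
        ((orL (ψ :: L) (a.imp b)).imp (a.imp (orL (ψ :: L) b)))) := by
      refine Provable.taut (fun v hv => ?_)
      simp only [orL, List.foldr, Formula.disj, hv.1, hv.2]
      tauto
    exact t.mp ih

/-- Peeling hypotheses of the shape ¬ψ into a disjunction. -/
theorem peel_negs {base : Set (Formula Agent V)} (g : Formula Agent V → Formula Agent V) :
    ∀ (l : List (Formula Agent V)), (∀ ν ∈ l, ν = (g ν).neg) →
    ∀ χ : Formula Agent V, ProvableFrom (base ∪ {x | x ∈ l}) χ →
    ProvableFrom base (orL (l.map g) χ) := by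
  intro l
  induction l with
  | nil =>
    intro _ χ h
    simpa [orL] using h.weaken (by simp)
  | cons ν rest ih =>
    intro hg χ h
    have h1 : ProvableFrom (insert ν (base ∪ {x | x ∈ rest})) χ := by
      refine h.weaken ?_
      intro y hy
      rcases hy with hy | hy
      · exact Or.inr (Or.inl hy)
      · rcases List.mem_cons.mp hy with rfl | hy
        · exact Or.inl rfl
        · exact Or.inr (Or.inr hy)
    have h2 : ProvableFrom (base ∪ {x | x ∈ rest}) (ν.imp χ) := deduction h1
    have h3 := ih (fun ν' hν' => hg ν' (List.mem_cons_of_mem _ hν')) (ν.imp χ) h2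
    rw [hg ν (List.mem_cons_self)] at h3
    have h4 := (ProvableFrom.thm (prov_orL_imp (rest.map g) (g ν).neg χ)).mp h3
    exact h4

end OrL

section Fold

theorem conj_mem {X : Set (Formula Agent V)} (hX : MaxConsistent X)
    {a b : Formula Agent V} (ha : a ∈ X) (hb : b ∈ X) : a.conj b ∈ X := by
  have t : Provable (a.imp (b.imp (a.conj b))) :=
    Provable.taut (fun v hv => by simp only [Formula.conj, hv.1, hv.2]; tauto)
  exact hX.mp_mem (hX.mp_mem (hX.mem_of_provable t) ha) hb

theorem disj_mem_left {X : Set (Formula Agent V)} (hX : MaxConsistent X)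
    {a : Formula Agent V} (b : Formula Agent V) (ha : a ∈ X) : a.disj b ∈ X := by
  have t : Provable (a.imp (a.disj b)) :=
    Provable.taut (fun v hv => by simp only [Formula.disj, hv.1, hv.2]; tauto)
  exact hX.mp_mem (hX.mem_of_provable t) ha

/-- Iterated application of the Joint Responsibility axiom. -/
theorem fold_blame {X : Set (Formula Agent V)} (hX : MaxConsistent X) (C D : Set Agent) :
    ∀ (L : List (Formula Agent V × Set Agent × Set Agent)),
      (∀ r ∈ L, r.2.1 ⊆ C ∧ r.2.2 ⊆ D ∧
        Formula.dknow r.2.1 (Formula.blame r.2.1 r.2.2 r.1) ∈ X) →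
      List.Pairwise (fun r r' => r.2.2 ∩ r'.2.2 = ∅) L →
      ∀ (χ : Formula Agent V) (C0 D0 : Set Agent),
        Formula.blame C0 D0 χ ∈ X → C0 ⊆ C → D0 ⊆ D → (∀ r ∈ L, D0 ∩ r.2.2 = ∅) →
        ∃ (χ' : Formula Agent V) (C1 D1 : Set Agent), Formula.blame C1 D1 χ' ∈ X ∧
          C1 ⊆ C ∧ D1 ⊆ D ∧
          ∀ v : Formula Agent V → Prop, IsPropValuation v →
            (v χ' ↔ v χ ∨ ∃ r ∈ L, v r.1) := by
  intro L
  induction L with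
  | nil =>
    intro _ _ χ C0 D0 hB hC0 hD0 _
    exact ⟨χ, C0, D0, hB, hC0, hD0, fun v hv => by simp⟩
  | cons r rest ih =>
    intro hdata hpw χ C0 D0 hB hC0 hD0 hdisj
    obtain ⟨hrC, hrD, hdk⟩ := hdata r (List.mem_cons_self)
    have hdkχ : Formula.dknow C0 (Formula.blame C0 D0 χ) ∈ X :=
      hX.mp_mem (hX.mem_of_provable prov_b_dknow) hB
    have hconj := conj_mem hX hdkχ hdk
    have hjr := hX.mp_mem (hX.mem_of_provable
      (Provable.jointResp (hdisj r (List.mem_cons_self)))) hconj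
    have hχ : χ ∈ X := hX.mp_mem (hX.mem_of_provable Provable.truthB) hB
    have hdisjm : χ.disj r.1 ∈ X := disj_mem_left hX r.1 hχ
    have hB' : Formula.blame (C0 ∪ r.2.1) (D0 ∪ r.2.2) (χ.disj r.1) ∈ X :=
      hX.mp_mem hjr hdisjm
    have hdisj' : ∀ r' ∈ rest, (D0 ∪ r.2.2) ∩ r'.2.2 = ∅ := by
      intro r' hr'
      rw [Set.union_inter_distrib_right, hdisj r' (List.mem_cons_of_mem _ hr'),
        (List.pairwise_cons.mp hpw).1 r' hr', Set.union_empty]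
    obtain ⟨χ', C1, D1, h1, h2, h3, hsem⟩ :=
      ih (fun r' hr' => hdata r' (List.mem_cons_of_mem _ hr')) (List.pairwise_cons.mp hpw).2
        (χ.disj r.1) (C0 ∪ r.2.1) (D0 ∪ r.2.2) hB'
        (Set.union_subset hC0 hrC) (Set.union_subset hD0 hrD) hdisj'
    refine ⟨χ', C1, D1, h1, h2, h3, fun v hv => ?_⟩
    rw [hsem v hv]
    simp only [Formula.disj, hv.1, hv.2, List.mem_cons, exists_eq_or_imp]
    tauto

end Fold

section Gamma

/-- The key consistency lemma: the set Γ consisting of the K_C-consequences of X,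
    of φ and of the negations of all threat formulas is consistent. -/
theorem gamma_consistent {X : Set (Formula Agent V)} (hX : MaxConsistent X)
    (C D : Set Agent) (φ : Formula Agent V)
    (hφ : (φ.imp (Formula.blame C D φ)).neg ∈ X)
    (Th : Set (Formula Agent V × Set Agent × Set Agent))
    (hTh : ∀ r ∈ Th, r.2.1 ⊆ C ∧ r.2.2 ⊆ D ∧
      Formula.dknow r.2.1 (Formula.blame r.2.1 r.2.2 r.1) ∈ X)
    (hdisj : ∀ r ∈ Th, ∀ r' ∈ Th, r ≠ r' → r.2.2 ∩ r'.2.2 = ∅) :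
    Consistent ({χ | Formula.know C χ ∈ X} ∪ {φ} ∪ {θ | ∃ r ∈ Th, θ = r.1.neg}) := by
  classical
  set Kset : Set (Formula Agent V) := {χ | Formula.know C χ ∈ X} with hKset
  set Negs : Set (Formula Agent V) := {θ | ∃ r ∈ Th, θ = r.1.neg} with hNegs
  rintro ⟨θ0, h1, h2⟩
  have hbot : ProvableFrom (Kset ∪ {φ} ∪ Negs) (botF φ) := by
    have t : Provable (θ0.imp (θ0.neg.imp (botF φ))) :=
      Provable.taut (fun v hv => by simp only [botF, Formula.conj, hv.1, hv.2]; tauto)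
    exact ((ProvableFrom.thm t).mp h1).mp h2
  obtain ⟨Y, hY, hfin, hp⟩ := hbot.compact
  have hNfin : (Y ∩ Negs).Finite := hfin.inter_of_left _
  set Lν : List (Formula Agent V) := hNfin.toFinset.toList with hLν
  have hLνmem : ∀ ν, ν ∈ Lν ↔ ν ∈ Y ∩ Negs := by
    intro ν; rw [hLν, Finset.mem_toList, Set.Finite.mem_toFinset]
  have hLνnodup : Lν.Nodup := Finset.nodup_toList _
  have hch : ∀ ν ∈ Y ∩ Negs, ∃ r, r ∈ Th ∧ ν = r.1.neg := by
    rintro ν ⟨_, r, hr, rfl⟩; exact ⟨r, hr, rfl⟩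
  choose! f hfTh hfneg using hch
  set g : Formula Agent V → Formula Agent V := fun ν => (f ν).1 with hg
  -- peel off the negated hypotheses
  have hsub : Y ⊆ (Kset ∪ {φ}) ∪ {x | x ∈ Lν} := by
    intro y hy
    rcases hY hy with hy' | hy'
    · exact Or.inl hy'
    · exact Or.inr ((hLνmem y).mpr ⟨hy, hy'⟩)
  have hpeel := peel_negs g Lν
    (fun ν hν => hfneg ν ((hLνmem ν).mp hν)) (botF φ) (hp.weaken hsub)
  set Lψ : List (Formula Agent V) := Lν.map g with hLψ
  set θd : Formula Agent V := orL Lψ (botF φ) with hθd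
  have hded : ProvableFrom Kset (φ.imp θd) := by
    rw [Set.union_singleton] at hpeel
    exact deduction hpeel
  have hknow : Formula.know C (φ.imp θd) ∈ X := know_of_kset hX C hded
  -- reasoning inside X
  have hφX : φ ∈ X := hX.mp_mem (hX.mem_of_provable (Provable.taut
    (show Tautology ((φ.imp (Formula.blame C D φ)).neg.imp φ) from
      fun v hv => by simp only [hv.1, hv.2]; tauto))) hφ
  have hnB : (Formula.blame C D φ).neg ∈ X := hX.mp_mem (hX.mem_of_provable (Provable.taut
    (show Tautology ((φ.imp (Formula.blame C D φ)).neg.imp (Formula.blame C D φ).neg) from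
      fun v hv => by simp only [hv.1, hv.2]; tauto))) hφ
  have himpX : φ.imp θd ∈ X := hX.mp_mem (hX.mem_of_provable Provable.truthK) hknow
  have hθdX : θd ∈ X := hX.mp_mem himpX hφX
  obtain ⟨ψ0, hψ0L, hψ0X⟩ := orL_mem hX hθdX
  obtain ⟨ν₀, hν₀, rfl⟩ := List.mem_map.mp hψ0L
  have hν₀' : ν₀ ∈ Y ∩ Negs := (hLνmem ν₀).mp hν₀
  set r₀ := f ν₀ with hr₀
  have hr₀Th : r₀ ∈ Th := hfTh ν₀ hν₀'
  have hB₀ : Formula.blame r₀.2.1 r₀.2.2 r₀.1 ∈ X :=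
    hX.mp_mem (hX.mp_mem (hX.mem_of_provable prov_dknow_blame) (hTh r₀ hr₀Th).2.2) hψ0X
  -- the remaining threats
  set Lrest : List (Formula Agent V × Set Agent × Set Agent) := (Lν.erase ν₀).map f
    with hLrest
  have hmemrest : ∀ r ∈ Lrest, ∃ ν ∈ Y ∩ Negs, ν ≠ ν₀ ∧ f ν = r := by
    intro r hr
    obtain ⟨ν, hν, rfl⟩ := List.mem_map.mp hr
    have := (List.Nodup.mem_erase_iff hLνnodup).mp hν
    exact ⟨ν, (hLνmem ν).mp this.2, this.1, rfl⟩
  have hrestTh : ∀ r ∈ Lrest, r ∈ Th := by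
    intro r hr
    obtain ⟨ν, hν, _, rfl⟩ := hmemrest r hr
    exact hfTh ν hν
  have hinj : ∀ ν ∈ Y ∩ Negs, ∀ ν' ∈ Y ∩ Negs, f ν = f ν' → ν = ν' := by
    intro ν hν ν' hν' hff
    rw [hfneg ν hν, hfneg ν' hν', hff]
  have hpw : List.Pairwise (fun r r' => r.2.2 ∩ r'.2.2 = ∅) Lrest := by
    rw [hLrest, List.pairwise_map]
    refine List.Pairwise.imp_of_mem ?_ (hLνnodup.erase ν₀)
    intro ν ν' hν hν' hne
    have hν2 := (hLνmem ν).mp ((List.Nodup.mem_erase_iff hLνnodup).mp hν).2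
    have hν'2 := (hLνmem ν').mp ((List.Nodup.mem_erase_iff hLνnodup).mp hν').2
    exact hdisj _ (hfTh ν hν2) _ (hfTh ν' hν'2) (fun hf => hne (hinj ν hν2 ν' hν'2 hf))
  have hD0disj : ∀ r ∈ Lrest, r₀.2.2 ∩ r.2.2 = ∅ := by
    intro r hr
    obtain ⟨ν, hν, hne, rfl⟩ := hmemrest r hr
    exact hdisj _ hr₀Th _ (hfTh ν hν) (fun hf => hne (hinj ν hν ν₀ hν₀' hf.symm))
  obtain ⟨χ', C1, D1, hB1, hC1, hD1, hsem⟩ := fold_blame hX C D Lrest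
    (fun r hr => hTh r (hrestTh r hr)) hpw r₀.1 r₀.2.1 r₀.2.2 hB₀
    (hTh r₀ hr₀Th).1 (hTh r₀ hr₀Th).2.1 hD0disj
  -- θd implies χ' propositionally
  have htaut : Tautology ((φ.imp θd).imp (φ.imp χ')) := by
    intro v hv
    rw [hv.2]
    intro hφθ
    rw [hv.2] at hφθ
    rw [hv.2]
    intro hφv
    have hθv := hφθ hφv
    rw [hθd, orL_val hv] at hθv
    rcases hθv with ⟨ψ, hψ, hvψ⟩ | hb
    · rw [hsem v hv]
      obtain ⟨ν, hν, rfl⟩ := List.mem_map.mp hψ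
      by_cases hne : ν = ν₀
      · subst hne; exact Or.inl hvψ
      · refine Or.inr ⟨f ν, List.mem_map.mpr ⟨ν, (List.mem_erase_of_ne hne).mpr hν, rfl⟩, hvψ⟩
    · exact absurd hb (botF_val hv)
  have hknow2 : Formula.know C (φ.imp χ') ∈ X :=
    hX.mp_mem (hX.mem_of_provable (prov_know_imp (Provable.taut htaut))) hknow
  have hBCD : Formula.blame C D χ' ∈ X :=
    hX.mp_mem (hX.mem_of_provable (Provable.monoB hC1 hD1)) hB1
  have hfinal : Formula.blame C D φ ∈ X :=
    hX.mp_mem (hX.mp_mem (hX.mp_mem (hX.mem_of_provable Provable.strictCond) hknow2) hBCD) hφX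
  exact hX.not_both hfinal hnB

end Gamma

end Aux

/-- Lemma 15: in the canonical game G(X₀), for any play (α,δ,ω) ∈ P,
    any formula ¬(φ → B_C^D φ) ∈ hd(ω), and any action profile s ∈ Δ^D, there is a
    play (α',δ',ω') ∈ P with α ∼_C α', s =_D δ', and φ ∈ hd(ω'). -/

theorem B_child_exists {Agent V B : Type}
    (hB : Cardinal.mk Agent < Cardinal.mk B)
    (X₀ : Set (Formula Agent V)) (hX₀ : MaxConsistent X₀)
    (x : CPlay X₀ B) (hx : x ∈ CP X₀ B) (C D : Set Agent) (φ : Formula Agent V)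
    (h : Formula.neg (φ.imp (Formula.blame C D φ)) ∈ chd x.2.2)
    (s : Agent → CAct X₀ B) :
    ∃ x' ∈ CP X₀ B, IsimC C x.1 x'.1 ∧ (∀ a ∈ D, s a = x'.2.1 a) ∧
      φ ∈ chd x'.2.2 := by
  classical
  set ω := x.2.2 with hω
  have hmcω : MaxConsistent (chd ω) := mc_chd hX₀ ω
  -- the default action
  set dflt : CAct X₀ B := (botF φ, ∅, ω) with hdflt
  -- the fibers of the action profile s
  set fib : CAct X₀ B → Set Agent := fun r => {a | a ∈ D ∧ s a = r} with hfib
  -- the set of threats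
  set ThC : Set (CAct X₀ B) := {r | (∃ a ∈ D, s a = r) ∧ r.2.1 ⊆ C ∧ csimC r.2.1 ω r.2.2 ∧
    Formula.dknow r.2.1 (Formula.blame r.2.1 (fib r) r.1) ∈ chd r.2.2} with hThC
  set Th' : Set (Formula Agent V × Set Agent × Set Agent) :=
    (fun r => (r.1, r.2.1, fib r)) '' ThC with hTh'
  -- knowledge transfer for threats
  have htransfer : ∀ r ∈ ThC,
      Formula.dknow r.2.1 (Formula.blame r.2.1 (fib r) r.1) ∈ chd ω := by
    rintro r ⟨_, _, hsim, hdk⟩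
    have hmcv : MaxConsistent (chd r.2.2) := mc_chd hX₀ r.2.2
    have hnot : Formula.know r.2.1 (Formula.blame r.2.1 (fib r) r.1).neg ∉ chd r.2.2 :=
      hmcv.not_mem_of_neg_mem hdk
    rw [← know_transfer hX₀ hsim] at hnot
    exact hmcω.neg_mem hnot
  -- Γ is consistent
  have hgamma : Consistent ({χ | Formula.know C χ ∈ chd ω} ∪ {φ} ∪
      {θ | ∃ r ∈ Th', θ = r.1.neg}) := by
    apply gamma_consistent hmcω C D φ h Th'
    · rintro r' ⟨r, hr, rfl⟩
      exact ⟨hr.2.1, fun a ha => ha.1, htransfer r hr⟩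
    · rintro r' ⟨r, hr, rfl⟩ r'' ⟨t, ht, rfl⟩ hne
      ext a
      simp only [Set.mem_inter_iff, Set.mem_empty_iff_false, iff_false, not_and]
      rintro ⟨haD, hsa⟩ ⟨haD', hsa'⟩
      exact hne (by rw [← hsa, ← hsa'])
  obtain ⟨Xn, hΓXn, hXn⟩ := lindenbaum hgamma
  -- a fresh branching index
  have hfresh : ∃ b : B, ∀ a ∈ D, ∀ (e : Step Agent V B) (t' : List (Step Agent V B)),
      (s a).2.2.1 = ω.1 ++ e :: t' → e.2.1 ≠ b := by
    by_contra hcon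
    push_neg at hcon
    choose ja hjaD je jt hjeq hjb using hcon
    have hinj : Function.Injective ja := by
      intro b1 b2 hj
      have h1 := hjeq b1
      have h2 := hjeq b2
      rw [hj] at h1
      rw [h1] at h2
      have h3 := List.append_inj_right h2 rfl
      have h4 : je b1 = je b2 := (List.cons.injEq _ _ _ _ ▸ h3).1
      rw [← hjb b1, ← hjb b2, h4]
    exact absurd (Cardinal.mk_le_of_injective hinj) (not_le.mpr hB)
  obtain ⟨b, hb⟩ := hfresh
  -- the new outcome
  have hvalid : ValidSeq X₀ (ω.1 ++ [(C, b, Xn)]) := by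
    rw [validSeq_append]
    refine ⟨ω.2, hXn, ?_, trivial⟩
    intro θ hθ
    exact hΓXn (Or.inl (Or.inl hθ))
  set ω' : COutcome X₀ B := ⟨ω.1 ++ [(C, b, Xn)], hvalid⟩ with hω'
  have hchdω' : chd ω' = Xn := by
    show hdSeq X₀ (ω.1 ++ [(C, b, Xn)]) = Xn
    rw [hdSeq_append]; rfl
  set δ' : Agent → CAct X₀ B := fun a => if a ∈ D then s a else dflt with hδ'
  refine ⟨(ctoI ω', δ', ω'), ?_, ?_, ?_, ?_⟩
  · -- membership in CP
    refine ⟨rfl, ?_⟩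
    intro v C' D' ψ hdk hδ hsim
    rw [show (((ctoI ω', δ', ω') : CPlay X₀ B)).2.2 = ω' from rfl] at hsim ⊢
    rw [hchdω']
    have hmcv : MaxConsistent (chd v) := mc_chd hX₀ v
    rcases D'.eq_empty_or_nonempty with rfl | ⟨a1, ha1⟩
    · -- None to Act
      exfalso
      have hk : Formula.know C' (Formula.blame C' ∅ ψ).neg ∈ chd v :=
        hmcv.mem_of_provable (Provable.nec Provable.noneToAct)
      exact hmcv.not_both hk hdk
    · by_cases hψbot : ψ = botF φ
      · subst hψbot
        exact hXn.mem_of_provable (Provable.taut (neg_botF_taut φ))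
      have hD'D : ∀ a ∈ D', a ∈ D ∧ s a = (ψ, C', v) := by
        intro a ha
        have hδa := hδ a ha
        simp only [hδ'] at hδa
        by_cases haD : a ∈ D
        · rw [if_pos haD] at hδa; exact ⟨haD, hδa⟩
        · rw [if_neg haD] at hδa
          have : botF φ = ψ := congrArg Prod.fst hδa
          exact absurd this.symm hψbot
      by_cases hpre : ω'.1 <+: v.1
      · exfalso
        obtain ⟨t', hv1⟩ := hpre
        have hsav : (s a1).2.2 = v := by rw [(hD'D a1 ha1).2]
        refine hb a1 (hD'D a1 ha1).1 (C, b, Xn) t' ?_ rfl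
        rw [hsav, ← hv1, hω']
        simp
      · -- the triple is a genuine threat
        have hkey : ∀ a ∈ C', a ∈ C ∧ csimA a ω v := by
          intro a ha
          obtain ⟨w, t, t', h1, h2, h3, h4⟩ := hsim a ha
          rcases List.eq_nil_or_concat t with rfl | ⟨t0, e0, rfl⟩
          · exact absurd ⟨t', by rw [h1, List.append_nil, ← h2]⟩ hpre
          · simp only [List.concat_eq_append] at h1 h3
            have h1' : (w ++ t0) ++ [e0] = ω.1 ++ [(C, b, Xn)] := by
              rw [List.append_assoc, ← h1]
            obtain ⟨hw0, he0⟩ := List.append_inj' h1' rfl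
            have he0' : e0 = (C, b, Xn) := by simpa using he0
            have haC : a ∈ C := by
              have h5 := h3 e0 (by simp)
              rw [he0'] at h5
              exact h5
            exact ⟨haC, w, t0, t', hw0.symm, h2, fun e he => h3 e (by simp [he]), h4⟩
        have hth : (ψ, C', v) ∈ ThC := by
          refine ⟨⟨a1, (hD'D a1 ha1).1, (hD'D a1 ha1).2⟩, fun a ha => (hkey a ha).1,
            fun a ha => (hkey a ha).2, ?_⟩
          have hsubfib : D' ⊆ fib (ψ, C', v) := fun a ha => ⟨(hD'D a ha).1, (hD'D a ha).2⟩
          exact hmcv.mp_mem (hmcv.mem_of_provable (prov_dknow_mono hsubfib)) hdk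
        exact hΓXn (Or.inr ⟨(ψ, C', fib (ψ, C', v)), ⟨(ψ, C', v), hth, rfl⟩, rfl⟩)
  · -- IsimC
    refine ⟨ω, ω', hx.1, rfl, fun a ha => ⟨ω.1, [], [(C, b, Xn)],
      (List.append_nil _).symm, by rw [hω'], by simp, ?_⟩⟩
    intro e he
    rw [List.mem_singleton] at he
    subst he
    exact ha
  · intro a ha
    show s a = δ' a
    simp only [hδ', if_pos ha]
  · show φ ∈ chd ω'
    rw [hchdω']
    exact hΓXn (Or.inl (Or.inr rfl))

end DutyToWarn
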